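/- Let 0 < r < r′ < 1, let m ∈ (1/2, 3/2) satisfy 2rm = (m − 1/2)²(m + 3/2), and let m′ ∈ (1/2, 3/2) satisfy 2r′m′ = (m′ − 1/2)²(m′ + 3/2). Then m < m′; that is, the root m₃(r) ∈ (1/2, 3/2) of the cubic fixed-point equation is strictly increasing in r. -/

import Mathlib

/-- **Monotonicity of the root `m₃(r)`.**
If `0 < r < r' < 1`, `m ∈ (1/2, 3/2)` satisfies `2rm = (m − 1/2)²(m + 3/2)` and
`m' ∈ (1/2, 3/2)` satisfies `2r'm' = (m' − 1/2)²(m' + 3/2)`, then `m < m'`: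
the root `m₃(r)` of the cubic fixed-point equation in `(1/2, 3/2)` is strictly
increasing in `r`. -/
theorem cubic_root_strict_mono (r r' m m' : ℝ)
    (hr0 : 0 < r) (hrr' : r < r') (hr'1 : r' < 1)
    (hm : m ∈ Set.Ioo (1 / 2 : ℝ) (3 / 2))
    (heq : 2 * r * m = (m - 1 / 2) ^ 2 * (m + 3 / 2))
    (hm' : m' ∈ Set.Ioo (1 / 2 : ℝ) (3 / 2))
    (heq' : 2 * r' * m' = (m' - 1 / 2) ^ 2 * (m' + 3 / 2)) :
    m < m' := by
  obtain ⟨h1, h2⟩ := hm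
  obtain ⟨h1', h2'⟩ := hm'
  by_contra h
  push_neg at h
  have hkey : (m' - m) * (m * m' * (m + m') + m * m' / 2 - 3 / 8) ≤ 0 := by
    nlinarith [mul_pos (by linarith : (0:ℝ) < m) (by linarith : (0:ℝ) < m'),
      mul_le_mul_of_nonneg_left h (by linarith : (0:ℝ) ≤ m')]
  have h2rm : 2 * (r' - r) * (m * m') = (m' - m) * (m * m' * (m + m') + m * m' / 2 - 3 / 8) := by
    have e1 := congrArg (· * m') heq
    have e2 := congrArg (· * m) heq'
    ring_nf at e1 e2 ⊢
    nlinarith [e1, e2]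
  nlinarith [mul_pos (by linarith : (0:ℝ) < m) (by linarith : (0:ℝ) < m')]
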